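/- Let C be a closed convex subset of EuclideanSpace ℝ (Fin N) and let ρ be a real number with 0 ≤ ρ. Then the erosion {x ∈ C | ρ < Metric.infDist x (frontier C)} of C by the closed ball of radius ρ is a convex open subset of EuclideanSpace ℝ (Fin N). -/

import Mathlib

open Metric Set

lemma my_connected_inter_frontier {X : Type*} [TopologicalSpace X] {s t : Set X}
    (hs : IsPreconnected s) (h1 : (s ∩ t).Nonempty) (h2 : (s \ t).Nonempty) :
    (s ∩ frontier t).Nonempty := by
  by_contra h
  rw [not_nonempty_iff_eq_empty] at h
  have hdisj : ∀ z ∈ s, z ∉ frontier t := fun z hz hf =>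
    (eq_empty_iff_forall_notMem.1 h z ⟨hz, hf⟩)
  have key := hs (interior t) (closure t)ᶜ isOpen_interior isClosed_closure.isOpen_compl ?_ ?_ ?_
  · obtain ⟨z, _, hzi, hzc⟩ := key
    exact hzc (subset_closure (interior_subset hzi))
  · intro z hz
    by_cases hc : z ∈ closure t
    · left
      by_contra hzi
      exact hdisj z hz ⟨hc, hzi⟩
    · exact Or.inr hc
  · obtain ⟨w, hws, hwt⟩ := h1
    refine ⟨w, hws, ?_⟩
    have : w ∈ closure t := subset_closure hwt
    by_contra hwi
    exact hdisj w hws ⟨this, hwi⟩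
  · obtain ⟨w, hws, hwt⟩ := h2
    refine ⟨w, hws, fun hc => ?_⟩
    by_cases hwi : w ∈ interior t
    · exact hwt (interior_subset hwi)
    · exact hdisj w hws ⟨hc, hwi⟩

lemma my_ball_infDist_frontier_subset {E : Type*} [NormedAddCommGroup E] [NormedSpace ℝ E]
    {C : Set E} {x : E} (hx : x ∈ C) :
    ball x (infDist x (frontier C)) ⊆ C := by
  intro w hw
  by_contra hwC
  obtain ⟨p, hp_seg, hp_f⟩ := my_connected_inter_frontier
    (convex_segment x w).isPreconnected
    ⟨x, left_mem_segment ℝ x w, hx⟩ ⟨w, right_mem_segment ℝ x w, hwC⟩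
  have hpd : dist p x ≤ dist x w := by
    have := (convex_closedBall x (dist x w)).segment_subset
      (mem_closedBall_self dist_nonneg) (by simp [mem_closedBall, dist_comm]) hp_seg
    simpa [mem_closedBall] using this
  have h1 : infDist x (frontier C) ≤ dist x p := infDist_le_dist_of_mem hp_f
  have h2 : dist w x < infDist x (frontier C) := by rwa [mem_ball] at hw
  rw [dist_comm] at hpd
  rw [dist_comm] at h2
  linarith

/-- The erosion of a closed convex set by a closed ball is a convex open set. -/
theorem erosion_convex_isOpen {N : ℕ}
    (C : Set (EuclideanSpace ℝ (Fin N))) (hCc : IsClosed C) (hCconv : Convex ℝ C)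
    (ρ : ℝ) (hρ : 0 ≤ ρ) :
    Convex ℝ {x ∈ C | ρ < Metric.infDist x (frontier C)} ∧
      IsOpen {x ∈ C | ρ < Metric.infDist x (frontier C)} := by
  constructor
  · intro x hx y hy a b ha hb hab
    obtain ⟨hxC, hxd⟩ := hx
    obtain ⟨hyC, hyd⟩ := hy
    have hfne : (frontier C).Nonempty := by
      by_contra h
      rw [not_nonempty_iff_eq_empty] at h
      rw [h, infDist_empty] at hxd
      linarith
    set dx := infDist x (frontier C) with hdx
    set dy := infDist y (frontier C) with hdy
    have hdx0 : 0 < dx := lt_of_le_of_lt hρ hxd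
    have hdy0 : 0 < dy := lt_of_le_of_lt hρ hyd
    set z := a • x + b • y with hz
    set R := a * dx + b * dy with hR
    have hRρ : ρ < R := by
      rcases eq_or_lt_of_le ha with h0 | hapos
      · have hb1 : b = 1 := by linarith
        rw [hR, ← h0, hb1]; simpa using hyd
      · have h1 : a * ρ < a * dx := mul_lt_mul_of_pos_left hxd hapos
        have h2 : b * ρ ≤ b * dy := mul_le_mul_of_nonneg_left hyd.le hb
        nlinarith
    have hR0 : 0 < R := lt_of_le_of_lt hρ hRρ
    have hball : ball z R ⊆ C := by
      intro w hw
      have hwz : ‖w - z‖ < R := by rwa [mem_ball, dist_eq_norm] at hw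
      set u := x + (dx / R) • (w - z) with hu_def
      set v := y + (dy / R) • (w - z) with hv_def
      have hwz0 : 0 ≤ ‖w - z‖ := norm_nonneg _
      have hu : u ∈ C := by
        apply my_ball_infDist_frontier_subset hxC
        rw [mem_ball, dist_eq_norm]
        have he : u - x = (dx / R) • (w - z) := by rw [hu_def]; abel
        rw [he, norm_smul, Real.norm_eq_abs, abs_of_pos (div_pos hdx0 hR0)]
        calc dx / R * ‖w - z‖ < dx / R * R :=
              mul_lt_mul_of_pos_left hwz (div_pos hdx0 hR0)
          _ = dx := div_mul_cancel₀ _ hR0.ne'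
      have hv : v ∈ C := by
        apply my_ball_infDist_frontier_subset hyC
        rw [mem_ball, dist_eq_norm]
        have he : v - y = (dy / R) • (w - z) := by rw [hv_def]; abel
        rw [he, norm_smul, Real.norm_eq_abs, abs_of_pos (div_pos hdy0 hR0)]
        calc dy / R * ‖w - z‖ < dy / R * R :=
              mul_lt_mul_of_pos_left hwz (div_pos hdy0 hR0)
          _ = dy := div_mul_cancel₀ _ hR0.ne'
      have hcoef : a * (dx / R) + b * (dy / R) = 1 := by
        field_simp
        exact hR.symm
      have hcomb : a • u + b • v = w := by
        have h1 : a • u + b • v = (a • x + b • y) + (a * (dx / R) + b * (dy / R)) • (w - z) := by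
          simp only [hu_def, hv_def, smul_add, smul_smul, add_smul]
          abel
        rw [h1, hcoef, one_smul, ← hz]
        abel
      rw [← hcomb]
      exact hCconv hu hv ha hb hab
    refine ⟨hCconv hxC hyC ha hb hab, ?_⟩
    have hle : ∀ p ∈ frontier C, R ≤ dist z p := by
      intro p hp
      by_contra hlt
      push_neg at hlt
      have hpb : p ∈ ball z R := by rwa [mem_ball, dist_comm]
      have hpint : p ∈ interior C := interior_maximal hball isOpen_ball hpb
      exact hp.2 hpint
    have : R ≤ infDist z (frontier C) := by
      by_contra h
      push_neg at h
      obtain ⟨p, hp, hd⟩ := (infDist_lt_iff hfne).1 h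
      exact absurd (hle p hp) (not_le.2 hd)
    exact lt_of_lt_of_le hRρ this
  · have hSeq : {x ∈ C | ρ < Metric.infDist x (frontier C)}
        = {x | ρ < Metric.infDist x (frontier C)} ∩ interior C := by
      ext w
      constructor
      · rintro ⟨hwC, hwd⟩
        refine ⟨hwd, ?_⟩
        exact mem_interior.2 ⟨ball w (infDist w (frontier C)),
          my_ball_infDist_frontier_subset hwC, isOpen_ball,
          mem_ball_self (lt_of_le_of_lt hρ hwd)⟩
      · rintro ⟨hwd, hwi⟩
        exact ⟨interior_subset hwi, hwd⟩
    rw [hSeq]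
    exact (isOpen_lt continuous_const (continuous_infDist_pt _)).inter isOpen_interior
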